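/- For the binary CV PR box with components μ_{x,y} = (1/2)[δ_{(ℓ,(-1)^{xy}ℓ)} + δ_{(-ℓ,-(-1)^{xy}ℓ)}], the CFRD expression [⟨A₀B₀⟩ − ⟨A₁B₁⟩]² + [⟨A₀B₁⟩ + ⟨A₁B₀⟩]² − Σ_{x,y}⟨A_x²B_y²⟩ equals 4ℓ⁴; in particular, for ℓ ≠ 0 this box violates the CFRD inequality. -/

import Mathlib

open MeasureTheory
open scoped ENNReal

/-- The binary CV PR box `μ_{x,y} = (1/2)[δ_{(ℓ,(-1)^{xy}ℓ)} + δ_{(-ℓ,-(-1)^{xy}ℓ)}]`. -/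
noncomputable def prBox2 (ℓ : ℝ) (x y : Fin 2) : Measure (ℝ × ℝ) :=
  (1 / 2 : ℝ≥0∞) • Measure.dirac (ℓ, (-1 : ℝ) ^ ((x : ℕ) * (y : ℕ)) * ℓ) +
  (1 / 2 : ℝ≥0∞) • Measure.dirac (-ℓ, -((-1 : ℝ) ^ ((x : ℕ) * (y : ℕ)) * ℓ))

/-- The cross-moment `⟨A_x B_y⟩`. -/
noncomputable def E (ℓ : ℝ) (x y : Fin 2) : ℝ :=
  ∫ p : ℝ × ℝ, p.1 * p.2 ∂(prBox2 ℓ x y)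

/-- The second-moment `⟨A_x² B_y²⟩`. -/
noncomputable def S (ℓ : ℝ) (x y : Fin 2) : ℝ :=
  ∫ p : ℝ × ℝ, p.1 ^ 2 * p.2 ^ 2 ∂(prBox2 ℓ x y)

theorem int_box (f : ℝ × ℝ → ℝ) (hf : Measurable f) (p q : ℝ × ℝ) :
    ∫ z, f z ∂((1/2 : ℝ≥0∞) • Measure.dirac p + (1/2 : ℝ≥0∞) • Measure.dirac q)
      = (1/2) * f p + (1/2) * f q := by
  have hip : Integrable f (Measure.dirac p) :=
    (integrable_const (f p)).congr (by rw [Filter.EventuallyEq, ae_dirac_eq]; exact Filter.eventually_pure.2 rfl)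
  have hiq : Integrable f (Measure.dirac q) :=
    (integrable_const (f q)).congr (by rw [Filter.EventuallyEq, ae_dirac_eq]; exact Filter.eventually_pure.2 rfl)
  rw [integral_add_measure (hip.smul_measure (by norm_num)) (hiq.smul_measure (by norm_num)),
    integral_smul_measure, integral_smul_measure,
    integral_dirac' _ _ hf.stronglyMeasurable, integral_dirac' _ _ hf.stronglyMeasurable]
  norm_num

theorem E_eq (ℓ : ℝ) (x y : Fin 2) :
    E ℓ x y = (-1 : ℝ) ^ ((x : ℕ) * (y : ℕ)) * ℓ ^ 2 := by
  rw [E, prBox2, int_box (fun p : ℝ × ℝ => p.1 * p.2) (measurable_fst.mul measurable_snd)]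
  ring

theorem S_eq (ℓ : ℝ) (x y : Fin 2) : S ℓ x y = ℓ ^ 4 := by
  rw [S, prBox2, int_box (fun p : ℝ × ℝ => p.1 ^ 2 * p.2 ^ 2) ((measurable_fst.pow_const 2).mul (measurable_snd.pow_const 2))]
  have hs : ((-1 : ℝ) ^ ((x : ℕ) * (y : ℕ))) ^ 2 = 1 := by
    rw [← pow_mul, mul_comm _ 2, pow_mul]; norm_num
  linear_combination ℓ ^ 4 * hs

theorem stmt3 (ℓ : ℝ) :
    (E ℓ 0 0 - E ℓ 1 1) ^ 2 + (E ℓ 0 1 + E ℓ 1 0) ^ 2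
        - (S ℓ 0 0 + S ℓ 0 1 + S ℓ 1 0 + S ℓ 1 1) = 4 * ℓ ^ 4 ∧
    (ℓ ≠ 0 →
      S ℓ 0 0 + S ℓ 0 1 + S ℓ 1 0 + S ℓ 1 1
        < (E ℓ 0 0 - E ℓ 1 1) ^ 2 + (E ℓ 0 1 + E ℓ 1 0) ^ 2) := by
  simp only [E_eq, S_eq]
  norm_num
  refine ⟨by ring, fun h => ?_⟩
  nlinarith [pow_pos (pow_two_pos_of_ne_zero h) 2, sq_nonneg ℓ, sq_nonneg (ℓ^2)]
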